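/- In online conformal prediction with ideal feedback, where the threshold is updated as r_{t+1} = r_t - η(α - e_t) with e_t = 1{r_t < s_t}, scores s_t ∈ [0, B], learning rate η > 0, and initial threshold r_1 ∈ [0, B], the empirical miscoverage satisfies |α - (1/T) Σ_{t=1}^T e_t| ≤ (B + η)/(η T). -/

import Mathlib

/-- OCP with ideal feedback achieves empirical miscoverage
bounded by (B + η)/(η T). -/
theorem ocp_ideal_miscoverage
    (B η α : ℝ) (T : ℕ) (s r : ℕ → ℝ)
    (hB : 0 < B) (hη : 0 < η) (hα : α ∈ Set.Icc (0 : ℝ) 1) (hT : 1 ≤ T)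
    (hs : ∀ t, s t ∈ Set.Icc (0 : ℝ) B)
    (hr1 : r 1 ∈ Set.Icc (0 : ℝ) B)
    (hrec : ∀ t, 1 ≤ t →
      r (t + 1) = r t - η * (α - (if r t < s t then (1 : ℝ) else 0))) :
    |α - (1 / (T : ℝ)) * ∑ t ∈ Finset.Icc 1 T, (if r t < s t then (1 : ℝ) else 0)|
      ≤ (B + η) / (η * T) := by
  obtain ⟨hα0, hα1⟩ := hα
  -- bounds on r t
  have hbound : ∀ t, 1 ≤ t → r t ∈ Set.Icc (-η) (B + η) := by
    intro t ht
    induction t, ht using Nat.le_induction with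
    | base => exact ⟨by linarith [hr1.1], by linarith [hr1.2]⟩
    | succ n hn ih =>
      rw [hrec n hn]
      obtain ⟨h1, h2⟩ := ih
      by_cases h : r n < s n
      · simp only [h, if_pos]
        constructor
        · nlinarith
        · nlinarith [(hs n).2]
      · simp only [h, if_neg, not_false_iff]
        push_neg at h
        constructor
        · nlinarith [(hs n).1]
        · nlinarith
  -- telescoping
  have htel : ∀ n, 1 ≤ n → r (n + 1) = r 1 - η * ((n : ℝ) * α -
      ∑ t ∈ Finset.Icc 1 n, (if r t < s t then (1 : ℝ) else 0)) := by
    intro n hn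
    induction n, hn using Nat.le_induction with
    | base =>
      rw [hrec 1 le_rfl, Finset.Icc_self, Finset.sum_singleton]
      push_cast; ring
    | succ n hn ih =>
      rw [hrec (n + 1) (by omega),
        Finset.sum_Icc_succ_top (by omega : 1 ≤ n + 1), ih]
      push_cast
      ring
  have hTpos : (0 : ℝ) < T := by exact_mod_cast hT
  have hηT : (0 : ℝ) < η * T := by positivity
  have key := htel T hT
  have hrT := hbound (T + 1) (by omega)
  set S := ∑ t ∈ Finset.Icc 1 T, (if r t < s t then (1 : ℝ) else 0) with hS
  have heq : α - (1 / (T : ℝ)) * S = (r 1 - r (T + 1)) / (η * T) := by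
    rw [key]
    field_simp
    ring
  rw [heq, abs_div, abs_of_pos hηT]
  gcongr
  rw [abs_le]
  constructor
  · linarith [hr1.1, hrT.2]
  · linarith [hr1.2, hrT.1]
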